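/- Let ℍ := {z ∈ ℂ : Im z > 0}. There exists a universal constant C > 0 with the following property. Let Λ ⊆ ℂ be an open set and let φ : Λ → ℂ be an injective holomorphic map with φ(Λ) = ℍ. For z, w ∈ Λ define P(z) := −(1/π)·Im(1/φ(z)), Q(z) := −(1/π)·Im(1/φ(z)²), and G(w, z) := −(1/2π)·log|(φ(w) − φ(z))/(φ(w) − conj(φ(z)))|. Then P(z) > 0 for all z ∈ Λ, and for all distinct w, z ∈ Λ one has both |P(w)/P(z) − 1|·G(w, z) ≤ C and |Q(w)/P(w) − Q(z)/P(z)|·G(w, z)/P(z) ≤ C. -/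

import Mathlib

/-- Poisson kernel of `Λ` (with source at `φ⁻¹(0)`, normalized at `φ⁻¹(∞)`),
expressed through a uniformization `φ` of `Λ` onto the upper half-plane:
`P(z) = -(1/π)·Im(1/φ(z))`. -/
noncomputable def Pker (φ : ℂ → ℂ) (z : ℂ) : ℝ := -(1 / Real.pi) * ((φ z)⁻¹).im

/-- Derivative of the Poisson kernel with respect to the source point:
`Q(z) = -(1/π)·Im(1/φ(z)²)`. -/
noncomputable def Qker (φ : ℂ → ℂ) (z : ℂ) : ℝ := -(1 / Real.pi) * (((φ z) ^ 2)⁻¹).im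

/-- Green function of `Λ` expressed through a uniformization `φ` of `Λ` onto the upper
half-plane: `G(w,z) = -(1/2π)·log|(φ(w) - φ(z))/(φ(w) - conj(φ(z)))|`. -/
noncomputable def Gker (φ : ℂ → ℂ) (w z : ℂ) : ℝ :=
  -(1 / (2 * Real.pi)) *
    Real.log (‖(φ w - φ z) / (φ w - (starRingEnd ℂ) (φ z))‖)

lemma p_eq (u : ℂ) : Pker id u = u.im / (Real.pi * Complex.normSq u) := by
  simp only [Pker, id, Complex.inv_im]
  ring

lemma p_pos {u : ℂ} (hu : 0 < u.im) : 0 < Pker id u := by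
  have hn : 0 < Complex.normSq u := Complex.normSq_pos.2 (fun h => by simp [h] at hu)
  rw [p_eq]; positivity

lemma qp_eq {u : ℂ} (hu : 0 < u.im) : Qker id u / Pker id u = 2 * (u⁻¹).re := by
  have hu0 : u ≠ 0 := fun h => by simp [h] at hu
  have hn : Complex.normSq u ≠ 0 := (Complex.normSq_pos.2 hu0).ne'
  have him : (u ^ 2).im = 2 * u.re * u.im := by
    simp [pow_two, Complex.mul_im]; ring
  have hns : Complex.normSq (u ^ 2) = Complex.normSq u ^ 2 := map_pow _ _ _
  simp only [Qker, Pker, id, Complex.inv_im, Complex.inv_re, him, hns]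
  field_simp

open Complex in
lemma DD_sub_rr {u v : ℂ} :
    ‖u - (starRingEnd ℂ) v‖ ^ 2 - ‖u - v‖ ^ 2
      = 4 * u.im * v.im := by
  rw [Complex.sq_norm, Complex.sq_norm]
  simp [Complex.normSq_apply, Complex.sub_re, Complex.sub_im]
  ring

lemma key_ineq {u v : ℂ} (hu : 0 < u.im) :
    2 * u.im * ‖v‖ ≤
      ‖u‖ * (‖u - (starRingEnd ℂ) v‖ + ‖u - v‖) := by
  have h1 : ‖(u - (starRingEnd ℂ) u) * v‖ = 2 * u.im * ‖v‖ := by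
    rw [norm_mul, Complex.sub_conj]
    rw [norm_mul, Complex.norm_real, Complex.norm_I, Real.norm_eq_abs]
    rw [abs_of_pos (by linarith)]
    ring
  have h2 : (u - (starRingEnd ℂ) u) * v
      = u * (v - (starRingEnd ℂ) u) + (starRingEnd ℂ) u * (u - v) := by ring
  have h3 : ‖v - (starRingEnd ℂ) u‖ = ‖u - (starRingEnd ℂ) v‖ := by
    rw [← Complex.norm_conj (v - (starRingEnd ℂ) u)]
    simp only [map_sub, Complex.conj_conj]
    exact norm_sub_rev _ _
  calc 2 * u.im * ‖v‖ = ‖(u - (starRingEnd ℂ) u) * v‖ := h1.symm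
    _ = ‖u * (v - (starRingEnd ℂ) u) + (starRingEnd ℂ) u * (u - v)‖ := by rw [h2]
    _ ≤ ‖u * (v - (starRingEnd ℂ) u)‖ + ‖(starRingEnd ℂ) u * (u - v)‖ :=
        norm_add_le _ _
    _ = ‖u‖ * (‖u - (starRingEnd ℂ) v‖ + ‖u - v‖) := by
        rw [norm_mul, norm_mul, Complex.norm_conj, h3]; ring

lemma ratio_le {u v : ℂ} (hu : 0 < u.im) (hv : 0 < v.im) :
    Pker id u / Pker id v ≤
      (‖u - (starRingEnd ℂ) v‖ + ‖u - v‖) /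
      (‖u - (starRingEnd ℂ) v‖ - ‖u - v‖) := by
  set D := ‖u - (starRingEnd ℂ) v‖ with hD
  set r := ‖u - v‖ with hr
  have hrnn : 0 ≤ r := norm_nonneg _
  have hsq : D ^ 2 - r ^ 2 = 4 * u.im * v.im := DD_sub_rr
  have hrD : r < D := by nlinarith [mul_pos hu hv, norm_nonneg (u - (starRingEnd ℂ) v)]
  have hDpos : 0 < D := lt_of_le_of_lt hrnn hrD
  have hsq' : (D - r) * (D + r) = 4 * u.im * v.im := by rw [← hsq]; ring
  have hu0 : u ≠ 0 := fun h => by simp [h] at hu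
  have hv0 : v ≠ 0 := fun h => by simp [h] at hv
  have hn1 : 0 < Complex.normSq u := Complex.normSq_pos.2 hu0
  have hn2 : 0 < Complex.normSq v := Complex.normSq_pos.2 hv0
  have key2 : (2 * u.im * ‖v‖) ^ 2 ≤ (‖u‖ * (D + r)) ^ 2 :=
    pow_le_pow_left₀ (by positivity) (key_ineq hu) 2
  have k3 : 4 * u.im ^ 2 * Complex.normSq v ≤ Complex.normSq u * (D + r) ^ 2 := by
    nlinarith [key2, Complex.sq_norm u, Complex.sq_norm v]
  have key : u.im * Complex.normSq v * (D - r) ≤ v.im * Complex.normSq u * (D + r) := by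
    have h4 : (u.im * Complex.normSq v * (D - r)) * (D + r)
        ≤ (v.im * Complex.normSq u * (D + r)) * (D + r) := by
      calc (u.im * Complex.normSq v * (D - r)) * (D + r)
          = u.im * Complex.normSq v * ((D - r) * (D + r)) := by ring
        _ = v.im * (4 * u.im ^ 2 * Complex.normSq v) := by rw [hsq']; ring
        _ ≤ v.im * (Complex.normSq u * (D + r) ^ 2) := mul_le_mul_of_nonneg_left k3 hv.le
        _ = (v.im * Complex.normSq u * (D + r)) * (D + r) := by ring
    exact le_of_mul_le_mul_right h4 (by positivity)
  rw [p_eq, p_eq, div_le_div_iff₀ (by positivity) (by linarith)]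
  rw [div_mul_eq_mul_div, mul_div_assoc', div_le_div_iff₀ (by positivity) (by positivity)]
  linear_combination Real.pi * key

lemma core {u v : ℂ} (hu : 0 < u.im) (hv : 0 < v.im) (huv : u ≠ v) :
    |Pker id u / Pker id v - 1| * Gker id u v ≤ 4 ∧
    |Qker id u / Pker id u - Qker id v / Pker id v| * Gker id u v / Pker id v ≤ 4 := by
  have hπ := Real.pi_pos
  set D := ‖u - (starRingEnd ℂ) v‖ with hDdef
  set r := ‖u - v‖ with hrdef
  have hu0 : u ≠ 0 := fun h => by simp [h] at hu
  have hv0 : v ≠ 0 := fun h => by simp [h] at hv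
  have ha : 0 < ‖u‖ := norm_pos_iff.2 hu0
  have hb : 0 < ‖v‖ := norm_pos_iff.2 hv0
  have hr : 0 < r := norm_pos_iff.2 (sub_ne_zero.2 huv)
  have hsq : D ^ 2 - r ^ 2 = 4 * u.im * v.im := DD_sub_rr
  have hrD : r < D := by nlinarith [mul_pos hu hv, norm_nonneg (u - (starRingEnd ℂ) v)]
  have hDpos : 0 < D := lt_trans hr hrD
  have hG : Gker id u v = 1 / (2 * Real.pi) * Real.log (D / r) := by
    simp only [Gker, id]
    rw [norm_div, Real.log_div hr.ne' hDpos.ne', Real.log_div hDpos.ne' hr.ne']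
    ring
  have hGnn : 0 ≤ Gker id u v := by
    rw [hG]
    exact mul_nonneg (by positivity) (Real.log_nonneg ((one_le_div hr).2 hrD.le))
  have hGle : Gker id u v ≤ 1 / (2 * Real.pi) * ((D - r) / r) := by
    rw [hG]
    have h1 := Real.log_le_sub_one_of_pos (div_pos hDpos hr)
    have h2 : D / r - 1 = (D - r) / r := by rw [sub_div, div_self hr.ne']
    apply mul_le_mul_of_nonneg_left _ (by positivity)
    linarith
  have hpu := p_pos hu
  have hpv := p_pos hv
  constructor
  · -- first estimate
    have hub : Pker id u / Pker id v ≤ (D + r) / (D - r) := ratio_le hu hv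
    have hlb : (D - r) / (D + r) ≤ Pker id u / Pker id v := by
      have h := ratio_le hv hu
      have hD' : ‖v - (starRingEnd ℂ) u‖ = D := by
        rw [← Complex.norm_conj (v - (starRingEnd ℂ) u)]
        simp only [map_sub, Complex.conj_conj]
        exact norm_sub_rev _ _
      have hr' : ‖v - u‖ = r := norm_sub_rev _ _
      rw [hD', hr'] at h
      rw [div_le_div_iff₀ hpu (by linarith)] at h
      rw [div_le_div_iff₀ (by linarith) hpv]
      linarith
    have habs : |Pker id u / Pker id v - 1| ≤ 2 * r / (D - r) := by
      rw [abs_le]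
      constructor
      · have e1 : (D - r) / (D + r) + 2 * r / (D + r) = 1 := by
          rw [← add_div, div_eq_one_iff_eq (by linarith)]
          ring
        have e2 : 2 * r / (D + r) ≤ 2 * r / (D - r) := by
          gcongr
          · linarith
        linarith
      · have e3 : (D + r) / (D - r) - 2 * r / (D - r) = 1 := by
          rw [← sub_div, div_eq_one_iff_eq (by linarith)]
          ring
        linarith
    have hmul : |Pker id u / Pker id v - 1| * Gker id u v
        ≤ (2 * r / (D - r)) * (1 / (2 * Real.pi) * ((D - r) / r)) :=
      mul_le_mul habs hGle hGnn (div_pos (by positivity) (by linarith)).le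
    have heq : (2 * r / (D - r)) * (1 / (2 * Real.pi) * ((D - r) / r)) = 1 / Real.pi := by
      rw [show (2 * r / (D - r)) * (1 / (2 * Real.pi) * ((D - r) / r))
          = (r / r) * ((D - r) / (D - r)) * (1 / Real.pi) from by ring,
        div_self hr.ne', div_self (by linarith : D - r ≠ 0)]
      ring
    have hle4 : 1 / Real.pi ≤ 4 := by
      rw [div_le_iff₀ hπ]
      nlinarith [Real.pi_gt_three]
    rw [heq] at hmul
    linarith
  · -- second estimate
    have KI := key_ineq (v := v) hu
    have hA : |Qker id u / Pker id u - Qker id v / Pker id v|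
        ≤ 2 * r / (‖u‖ * ‖v‖) := by
      rw [qp_eq hu, qp_eq hv]
      have e1 : 2 * (u⁻¹).re - 2 * (v⁻¹).re = 2 * ((u⁻¹ - v⁻¹).re) := by
        rw [Complex.sub_re]; ring
      have e2 : ‖u⁻¹ - v⁻¹‖ = r / (‖u‖ * ‖v‖) := by
        rw [inv_sub_inv hu0 hv0, norm_div, norm_mul,
          norm_sub_rev v u]
      calc |2 * (u⁻¹).re - 2 * (v⁻¹).re| = 2 * |(u⁻¹ - v⁻¹).re| := by
            rw [e1, abs_mul]; norm_num
        _ ≤ 2 * ‖u⁻¹ - v⁻¹‖ :=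
            mul_le_mul_of_nonneg_left (Complex.abs_re_le_norm _) (by norm_num)
        _ = 2 * r / (‖u‖ * ‖v‖) := by rw [e2]; ring
    have hXY : |Qker id u / Pker id u - Qker id v / Pker id v| * Gker id u v
        ≤ (2 * r / (‖u‖ * ‖v‖)) * (1 / (2 * Real.pi) * ((D - r) / r)) :=
      mul_le_mul hA hGle hGnn (by positivity)
    have hdiv : |Qker id u / Pker id u - Qker id v / Pker id v| * Gker id u v / Pker id v
        ≤ ((2 * r / (‖u‖ * ‖v‖)) * (1 / (2 * Real.pi) * ((D - r) / r)))
            / Pker id v := by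
      gcongr
    have heq2 : ((2 * r / (‖u‖ * ‖v‖)) * (1 / (2 * Real.pi) * ((D - r) / r)))
        / Pker id v = (D - r) * ‖v‖ / (‖u‖ * v.im) := by
      rw [p_eq, ← Complex.sq_norm v]
      field_simp
    have hfin : (D - r) * ‖v‖ / (‖u‖ * v.im) ≤ 4 := by
      rw [div_le_iff₀ (by positivity)]
      nlinarith [hsq, hDpos, hrD, hr, ha, hb, hu, hv,
        mul_nonneg (mul_nonneg hv.le ha.le) (sub_nonneg.2 hrD.le),
        mul_nonneg hv.le (sub_nonneg.2 KI),
        mul_nonneg (mul_nonneg hr.le hb.le) (sub_nonneg.2 hrD.le),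
        mul_pos hDpos hr]
    calc |Qker id u / Pker id u - Qker id v / Pker id v| * Gker id u v / Pker id v
        ≤ ((2 * r / (‖u‖ * ‖v‖)) * (1 / (2 * Real.pi) * ((D - r) / r)))
            / Pker id v := hdiv
      _ = (D - r) * ‖v‖ / (‖u‖ * v.im) := heq2
      _ ≤ 4 := hfin

/-- There is a universal constant `C > 0` such that for every open
set `Λ ⊆ ℂ` and every injective holomorphic map `φ : Λ → ℂ` with `φ(Λ) = ℍ` (the upper
half-plane), the function `P` is strictly positive on `Λ`, and for all distinct
`w, z ∈ Λ` one has `|P(w)/P(z) - 1|·G(w,z) ≤ C` and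
`|Q(w)/P(w) - Q(z)/P(z)|·G(w,z)/P(z) ≤ C`. -/
theorem statement11 :
    ∃ C : ℝ, 0 < C ∧
      ∀ (Λ : Set ℂ) (φ : ℂ → ℂ), IsOpen Λ → Set.InjOn φ Λ →
        DifferentiableOn ℂ φ Λ → φ '' Λ = {z : ℂ | 0 < z.im} →
        (∀ z ∈ Λ, 0 < Pker φ z) ∧
        ∀ w ∈ Λ, ∀ z ∈ Λ, w ≠ z →
          |Pker φ w / Pker φ z - 1| * Gker φ w z ≤ C ∧
          |Qker φ w / Pker φ w - Qker φ z / Pker φ z| * Gker φ w z / Pker φ z ≤ C := by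
  refine ⟨4, by norm_num, ?_⟩
  intro Λ φ _ hinj _ himg
  have hmem : ∀ z ∈ Λ, 0 < (φ z).im := by
    intro z hz
    have : φ z ∈ {z : ℂ | 0 < z.im} := himg ▸ Set.mem_image_of_mem φ hz
    exact this
  have hPe : ∀ z, Pker φ z = Pker id (φ z) := fun _ => rfl
  have hQe : ∀ z, Qker φ z = Qker id (φ z) := fun _ => rfl
  have hGe : ∀ w z, Gker φ w z = Gker id (φ w) (φ z) := fun _ _ => rfl
  constructor
  · intro z hz
    rw [hPe]
    exact p_pos (hmem z hz)
  · intro w hw z hz hwz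
    have huv : φ w ≠ φ z := fun h => hwz (hinj hw hz h)
    have h := core (hmem w hw) (hmem z hz) huv
    rw [hPe, hPe, hQe, hQe, hGe]
    exact h
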